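/- arXiv:1409.7408 — 4 statements merged into one kernel-verified Lean document; each statement's English description precedes it below -/
import Mathlib

section
/- Let r = (r_1,...,r_m) be a vector of positive integers with n = Σ r_i, and let Z be an m×n real matrix satisfying: (a) every column of Z sums to 1, (b) the i-th row of Z sums to r_i, and (c) all entries of Z lie in [0,1]. Then Z is a convex combination of multipermutation matrices parameterized by r. Conversely, every convex combination of multipermutation matrices parameterized by r satisfies (a), (b), (c). -/
open Matrix Finset
open scoped Classical

/-- Multipermutation matrix parameterized by multiplicity vector `r`. -/
def IsMPM {m n : ℕ} (r : Fin m → ℕ) (X : Matrix (Fin m) (Fin n) ℝ) : Prop :=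
  (∀ i j, X i j = 0 ∨ X i j = 1) ∧ (∀ j, ∑ i, X i j = 1) ∧
    (∀ i, ∑ j, X i j = (r i : ℝ))

theorem stmt_5 {m n : ℕ} (r : Fin m → ℕ) (hr : ∀ i, 0 < r i) (hn : ∑ i, r i = n)
    (Z : Matrix (Fin m) (Fin n) ℝ) :
    ((∀ j, ∑ i, Z i j = 1) ∧ (∀ i, ∑ j, Z i j = (r i : ℝ)) ∧
        (∀ i j, Z i j ∈ Set.Icc (0 : ℝ) 1)) ↔
      Z ∈ convexHull ℝ {X : Matrix (Fin m) (Fin n) ℝ | IsMPM r X} := by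
  constructor
  · rintro ⟨hcol, hrow, hbox⟩
    have hcard : Fintype.card (Σ i : Fin m, Fin (r i)) = n := by
      simp [Fintype.card_sigma, hn]
    let e : (Σ i : Fin m, Fin (r i)) ≃ Fin n := Fintype.equivFinOfCardEq hcard
    have hrne : ∀ i : Fin m, ((r i : ℝ)) ≠ 0 := fun i => by
      exact_mod_cast (hr i).ne'
    -- split row i into r i equal copies
    set D : Matrix (Fin n) (Fin n) ℝ :=
      fun k j => Z (e.symm k).1 j / r (e.symm k).1 with hDdef
    have hD : D ∈ doublyStochastic ℝ (Fin n) := by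
      rw [mem_doublyStochastic_iff_sum]
      refine ⟨fun k j => div_nonneg (hbox _ _).1 (Nat.cast_nonneg _), fun k => ?_, fun j => ?_⟩
      · rw [← Finset.sum_div, hrow, div_self (hrne _)]
      · rw [← Equiv.sum_comp e (fun k => D k j), ← Finset.univ_sigma_univ, Finset.sum_sigma]
        have : ∀ i : Fin m, ∑ t : Fin (r i), D (e ⟨i, t⟩) j = Z i j := by
          intro i
          have h1 : ∀ t : Fin (r i), D (e ⟨i, t⟩) j = Z i j / r i := by
            intro t; simp [hDdef]
          rw [Finset.sum_congr rfl (fun t _ => h1 t), Finset.sum_const, Finset.card_univ,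
            Fintype.card_fin, nsmul_eq_mul, mul_div_cancel₀ _ (hrne i)]
        rw [Finset.sum_congr rfl (fun i _ => this i), hcol]
    -- block-sum linear map
    let φ : Matrix (Fin n) (Fin n) ℝ →ₗ[ℝ] Matrix (Fin m) (Fin n) ℝ :=
      { toFun := fun M => Matrix.of fun i j => ∑ t : Fin (r i), M (e ⟨i, t⟩) j
        map_add' := by
          intro M N; ext i j; simp [Finset.sum_add_distrib]
        map_smul' := by
          intro c M; ext i j; simp [Finset.mul_sum] }
    have hφZ : φ D = Z := by
      ext i j
      have h1 : ∀ t : Fin (r i), D (e ⟨i, t⟩) j = Z i j / r i := by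
        intro t; simp [hDdef]
      show ∑ t : Fin (r i), D (e ⟨i, t⟩) j = Z i j
      rw [Finset.sum_congr rfl (fun t _ => h1 t), Finset.sum_const, Finset.card_univ,
        Fintype.card_fin, nsmul_eq_mul, mul_div_cancel₀ _ (hrne i)]
    have hperm : ∀ σ : Equiv.Perm (Fin n), IsMPM r (φ (σ.permMatrix ℝ)) := by
      intro σ
      have hentry : ∀ k j, (σ.permMatrix ℝ) k j = if σ k = j then 1 else 0 := by
        intro k j
        simp [Equiv.Perm.permMatrix, PEquiv.toMatrix_apply, Equiv.toPEquiv]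
      refine ⟨fun i j => ?_, fun j => ?_, fun i => ?_⟩
      · show (∑ t : Fin (r i), (σ.permMatrix ℝ) (e ⟨i, t⟩) j) = 0 ∨ _ = 1
        have : (∑ t : Fin (r i), (σ.permMatrix ℝ) (e ⟨i, t⟩) j) =
            ((Finset.univ.filter (fun t : Fin (r i) => σ (e ⟨i, t⟩) = j)).card : ℝ) := by
          rw [Finset.sum_congr rfl (fun t _ => hentry (e ⟨i, t⟩) j)]
          rw [Finset.sum_boole]
        rw [this]
        have hle : (Finset.univ.filter (fun t : Fin (r i) => σ (e ⟨i, t⟩) = j)).card ≤ 1 := by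
          refine Finset.card_le_one.2 fun a ha b hb => ?_
          simp only [Finset.mem_filter] at ha hb
          have := σ.injective (ha.2.trans hb.2.symm)
          have := e.injective this
          exact (Sigma.mk.inj_iff.1 this).2.eq
        rcases Nat.le_one_iff_eq_zero_or_eq_one.1 hle with h | h
        · left; rw [h]; norm_num
        · right
          show (∑ t : Fin (r i), (σ.permMatrix ℝ) (e ⟨i, t⟩) j) = 1
          rw [this, h]; norm_num
      · show (∑ i, ∑ t : Fin (r i), (σ.permMatrix ℝ) (e ⟨i, t⟩) j) = 1
        rw [← Finset.sum_sigma (Finset.univ) (fun _ => Finset.univ)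
          (fun s => (σ.permMatrix ℝ) (e s) j), Finset.univ_sigma_univ]
        rw [Equiv.sum_comp e (fun k => (σ.permMatrix ℝ) k j)]
        have : ∀ k, (σ.permMatrix ℝ) k j = if k = σ.symm j then 1 else 0 := by
          intro k; rw [hentry]
          congr 1
          simp [Equiv.eq_symm_apply, eq_comm]
        rw [Finset.sum_congr rfl (fun k _ => this k), Finset.sum_ite_eq']
        simp
      · show (∑ j, ∑ t : Fin (r i), (σ.permMatrix ℝ) (e ⟨i, t⟩) j) = (r i : ℝ)
        rw [Finset.sum_comm]
        have : ∀ t : Fin (r i), ∑ j, (σ.permMatrix ℝ) (e ⟨i, t⟩) j = 1 := by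
          intro t
          rw [Finset.sum_congr rfl (fun j _ => hentry (e ⟨i, t⟩) j)]
          rw [Finset.sum_ite_eq]
          simp
        rw [Finset.sum_congr rfl (fun t _ => this t)]
        simp
    -- conclude via Birkhoff
    have hD2 : D ∈ (doublyStochastic ℝ (Fin n) : Set (Matrix (Fin n) (Fin n) ℝ)) := hD
    rw [doublyStochastic_eq_convexHull_permMatrix] at hD2
    have : Z ∈ φ '' (convexHull ℝ {x | ∃ σ : Equiv.Perm (Fin n), σ.permMatrix ℝ = x}) :=
      ⟨D, hD2, hφZ⟩
    rw [φ.image_convexHull] at this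
    refine convexHull_mono ?_ this
    rintro x ⟨y, ⟨σ, rfl⟩, rfl⟩
    exact hperm σ
  · intro hZ
    have hsub : {X : Matrix (Fin m) (Fin n) ℝ | IsMPM r X} ⊆
        {Z : Matrix (Fin m) (Fin n) ℝ | (∀ j, ∑ i, Z i j = 1) ∧
          (∀ i, ∑ j, Z i j = (r i : ℝ)) ∧ (∀ i j, Z i j ∈ Set.Icc (0 : ℝ) 1)} := by
      rintro X ⟨h01, hc, hrw⟩
      refine ⟨hc, hrw, fun i j => ?_⟩
      rcases h01 i j with h | h <;> rw [h] <;> simp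
    have hconv : Convex ℝ {Z : Matrix (Fin m) (Fin n) ℝ | (∀ j, ∑ i, Z i j = 1) ∧
        (∀ i, ∑ j, Z i j = (r i : ℝ)) ∧ (∀ i j, Z i j ∈ Set.Icc (0 : ℝ) 1)} := by
      rintro x ⟨hx1, hx2, hx3⟩ y ⟨hy1, hy2, hy3⟩ a b ha hb hab
      refine ⟨fun j => ?_, fun i => ?_, fun i j => ?_⟩
      · have : ∑ i, (a • x + b • y) i j = a * ∑ i, x i j + b * ∑ i, y i j := by
          simp [Finset.sum_add_distrib, Finset.mul_sum]
        rw [this, hx1, hy1]; linarith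
      · have : ∑ j, (a • x + b • y) i j = a * ∑ j, x i j + b * ∑ j, y i j := by
          simp [Finset.sum_add_distrib, Finset.mul_sum]
        rw [this, hx2, hy2, ← add_mul, hab, one_mul]
      · have := (convex_Icc (0 : ℝ) 1) (hx3 i j) (hy3 i j) ha hb hab
        simpa using this
    exact convexHull_min hsub hconv hZ
end

section
/- Let s ∈ R^n be obtained from t ∈ R^m (with distinct entries) by repeating t_i exactly r_i times (s_j = t_i for j in the block I_i). Then for every multipermutation matrix X parameterized by r there exists an n×n permutation matrix P such that s·P = t·X, and conversely for every permutation matrix P the vector s·P equals t·X for the multipermutation matrix X given by X_{ij} = Σ_{k∈I_i} P_{kj}. -/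
open Matrix Finset
open scoped Classical

/-- Permutation matrix: binary with all row and column sums equal to 1. -/
def IsPermMatrix {n : ℕ} (P : Matrix (Fin n) (Fin n) ℝ) : Prop :=
  (∀ i j, P i j = 0 ∨ P i j = 1) ∧ (∀ j, ∑ i, P i j = 1) ∧ (∀ i, ∑ j, P i j = 1)

/-- `k` (a 0-based index) lies in the `i`-th consecutive block of sizes `r 0, r 1, ...`. -/
def InBlock {m : ℕ} (r : Fin m → ℕ) (i : Fin m) (k : ℕ) : Prop :=
  ∑ l ∈ Finset.Iio i, r l ≤ k ∧ k < (∑ l ∈ Finset.Iio i, r l) + r i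

lemma sum_Iic_eq {m : ℕ} (r : Fin m → ℕ) (i : Fin m) :
    ∑ l ∈ Finset.Iic i, r l = (∑ l ∈ Finset.Iio i, r l) + r i := by
  rw [← Finset.Iio_insert, Finset.sum_insert (by simp)]
  ring

lemma block_mono {m : ℕ} (r : Fin m → ℕ) {i j : Fin m} (h : i < j) :
    (∑ l ∈ Finset.Iio i, r l) + r i ≤ ∑ l ∈ Finset.Iio j, r l := by
  rw [← sum_Iic_eq]
  exact Finset.sum_le_sum_of_subset (fun x hx => by
    simp only [Finset.mem_Iic, Finset.mem_Iio] at *; exact lt_of_le_of_lt hx h)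

lemma block_uniq {m : ℕ} (r : Fin m → ℕ) {i j : Fin m} {k : ℕ}
    (hi : InBlock r i k) (hj : InBlock r j k) : i = j := by
  rcases lt_trichotomy i j with h | h | h
  · exact absurd (lt_of_lt_of_le hi.2 (le_trans (block_mono r h) hj.1)) (lt_irrefl k)
  · exact h
  · exact absurd (lt_of_lt_of_le hj.2 (le_trans (block_mono r h) hi.1)) (lt_irrefl k)

lemma block_exists {m n : ℕ} (r : Fin m → ℕ) (hn : ∑ i, r i = n) {k : ℕ} (hk : k < n) :
    ∃ i, InBlock r i k := by
  have hm : 0 < m := by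
    by_contra h
    push_neg at h
    interval_cases m
    simp at hn
    omega
  have hne : (Finset.univ : Finset (Fin m)).Nonempty := by
    simpa [Finset.univ_nonempty_iff] using Fin.pos_iff_nonempty.mp hm
  -- set of indices whose block starts at or before k
  set S := Finset.univ.filter (fun i : Fin m => ∑ l ∈ Finset.Iio i, r l ≤ k) with hS
  have hSne : S.Nonempty := by
    refine ⟨Finset.min' Finset.univ hne, ?_⟩
    simp only [hS, Finset.mem_filter, Finset.mem_univ, true_and]
    have : Finset.Iio (Finset.min' Finset.univ hne) = ∅ := by
      apply Finset.eq_empty_of_forall_notMem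
      intro x hx
      exact absurd (Finset.min'_le _ x (Finset.mem_univ x)) (not_le.mpr (Finset.mem_Iio.mp hx))
    simp [this]
  set i := S.max' hSne with hi
  have hile : ∑ l ∈ Finset.Iio i, r l ≤ k := by
    have := S.max'_mem hSne
    simpa [hS] using this
  refine ⟨i, hile, ?_⟩
  by_contra hlt
  push_neg at hlt
  -- the top index
  set itop := Finset.max' Finset.univ hne with hitop
  have htop : (∑ l ∈ Finset.Iio itop, r l) + r itop = n := by
    rw [← sum_Iic_eq, ← hn]
    congr 1
    apply Finset.eq_univ_of_forall
    intro x
    exact Finset.mem_Iic.mpr (Finset.le_max' _ x (Finset.mem_univ x))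
  have hine : i ≠ itop := by
    intro h
    rw [h, htop] at hlt
    omega
  have hilt : i < itop := lt_of_le_of_ne (Finset.le_max' _ i (Finset.mem_univ i)) hine
  -- minimal element above i
  have hTne : (Finset.univ.filter (fun j : Fin m => i < j)).Nonempty :=
    ⟨itop, by simp [hilt]⟩
  set j := Finset.min' _ hTne with hj
  have hij : i < j := by
    have h2 := Finset.min'_mem _ hTne
    rw [Finset.mem_filter] at h2
    exact h2.2
  have hIio : Finset.Iio j = Finset.Iic i := by
    ext x
    simp only [Finset.mem_Iio, Finset.mem_Iic]
    constructor
    · intro hx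
      by_contra hxi
      push_neg at hxi
      exact absurd (Finset.min'_le _ x (by simp [hxi])) (not_le.mpr hx)
    · intro hx
      exact lt_of_le_of_lt hx hij
  have : j ∈ S := by
    simp only [hS, Finset.mem_filter, Finset.mem_univ, true_and]
    rw [hIio, sum_Iic_eq]
    omega
  exact absurd (Finset.le_max' S j this) (not_le.mpr hij)

lemma block_end_le {m n : ℕ} (r : Fin m → ℕ) (hn : ∑ i, r i = n) (i : Fin m) :
    (∑ l ∈ Finset.Iio i, r l) + r i ≤ n := by
  rw [← sum_Iic_eq, ← hn]
  exact Finset.sum_le_sum_of_subset (fun x _ => Finset.mem_univ x)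

lemma card_block {m n : ℕ} (r : Fin m → ℕ) (hn : ∑ i, r i = n) (i : Fin m) :
    (Finset.univ.filter (fun k : Fin n => InBlock r i k.val)).card = r i := by
  have hle := block_end_le r hn i
  rw [show r i = (Finset.Ico (∑ l ∈ Finset.Iio i, r l) ((∑ l ∈ Finset.Iio i, r l) + r i)).card
      by rw [Nat.card_Ico]; omega]
  apply Finset.card_bij (fun k _ => k.val)
  · intro a ha
    simp only [Finset.mem_filter, Finset.mem_univ, true_and] at ha
    exact Finset.mem_Ico.mpr ⟨ha.1, ha.2⟩
  · intro a _ b _ h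
    exact Fin.val_injective h
  · intro x hx
    rw [Finset.mem_Ico] at hx
    exact ⟨⟨x, lt_of_lt_of_le hx.2 hle⟩, Finset.mem_filter.mpr ⟨Finset.mem_univ _, hx⟩, rfl⟩

theorem stmt_12 {m n : ℕ} (r : Fin m → ℕ) (hr : ∀ i, 0 < r i) (hn : ∑ i, r i = n)
    (t : Fin m → ℝ) (ht : Function.Injective t)
    (s : Fin n → ℝ) (hs : ∀ (i : Fin m) (k : Fin n), InBlock r i k.val → s k = t i) :
    (∀ X : Matrix (Fin m) (Fin n) ℝ, IsMPM r X →
        ∃ P : Matrix (Fin n) (Fin n) ℝ, IsPermMatrix P ∧ s ᵥ* P = t ᵥ* X) ∧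
      (∀ P : Matrix (Fin n) (Fin n) ℝ, IsPermMatrix P →
        s ᵥ* P = t ᵥ* (Matrix.of fun i j =>
          ∑ k ∈ Finset.univ.filter (fun k : Fin n => InBlock r i k.val), P k j)) := by
  have hbl : ∀ k : Fin n, ∃ i, InBlock r i k.val := fun k => block_exists r hn k.isLt
  choose g hg using hbl
  have hgiff : ∀ (i : Fin m) (k : Fin n), g k = i ↔ InBlock r i k.val :=
    fun i k => ⟨fun h => h ▸ hg k, fun h => block_uniq r (hg k) h⟩
  have hsk : ∀ k, s k = t (g k) := fun k => hs (g k) k (hg k)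
  constructor
  · rintro X ⟨hX01, hXcol, hXrow⟩
    -- each column has a unique 1
    have hex : ∀ j, ∃ i, X i j = 1 := by
      intro j
      by_contra h
      push_neg at h
      have : ∑ i, X i j = 0 := Finset.sum_eq_zero (fun i _ => (hX01 i j).resolve_right (h i))
      rw [hXcol j] at this
      norm_num at this
    choose f hf using hex
    have huniq : ∀ i j, X i j = 1 → i = f j := by
      intro i j hij
      by_contra hne
      have h2 : (2 : ℝ) ≤ ∑ i', X i' j := by
        calc (2:ℝ) = ∑ i' ∈ {i, f j}, X i' j := by
              rw [Finset.sum_pair hne, hij, hf j]; norm_num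
          _ ≤ ∑ i', X i' j := by
              apply Finset.sum_le_sum_of_subset_of_nonneg (Finset.subset_univ _)
              intro i' _ _
              rcases hX01 i' j with h | h <;> rw [h] <;> norm_num
      rw [hXcol j] at h2
      norm_num at h2
    have hXind : ∀ i j, X i j = if f j = i then 1 else 0 := by
      intro i j
      by_cases h : f j = i
      · rw [if_pos h, ← h, hf j]
      · rw [if_neg h]
        rcases hX01 i j with h0 | h1
        · exact h0
        · exact absurd (huniq i j h1).symm h
    -- fiber cardinalities
    have hcardf : ∀ i, (Finset.univ.filter (fun j : Fin n => f j = i)).card = r i := by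
      intro i
      have : ((r i : ℕ) : ℝ) = ((Finset.univ.filter (fun j : Fin n => f j = i)).card : ℝ) := by
        rw [← hXrow i]
        rw [Finset.sum_congr rfl (fun j _ => hXind i j)]
        rw [Finset.sum_boole]
      exact_mod_cast this.symm
    have hcardg : ∀ i, (Finset.univ.filter (fun k : Fin n => g k = i)).card = r i := by
      intro i
      rw [show Finset.univ.filter (fun k : Fin n => g k = i)
          = Finset.univ.filter (fun k : Fin n => InBlock r i k.val) by
        apply Finset.filter_congr; intro k _; simp [hgiff]]
      exact card_block r hn i
    have hcards : ∀ i : Fin m,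
        Fintype.card {k : Fin n // g k = i} = Fintype.card {j : Fin n // f j = i} := by
      intro i
      rw [Fintype.card_subtype, Fintype.card_subtype, hcardg, hcardf]
    let φ : ∀ i : Fin m, {k : Fin n // g k = i} ≃ {j : Fin n // f j = i} :=
      fun i => Fintype.equivOfCardEq (hcards i)
    let e : Fin n ≃ Fin n :=
      (Equiv.sigmaFiberEquiv g).symm.trans
        ((Equiv.sigmaCongrRight φ).trans (Equiv.sigmaFiberEquiv f))
    have hfe : ∀ k, f (e k) = g k := by
      intro k
      have h2 : e k = (φ (g k) ⟨k, rfl⟩).val := rfl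
      rw [h2]
      exact (φ (g k) ⟨k, rfl⟩).property
    refine ⟨fun k j => if e k = j then (1:ℝ) else 0, ⟨?_, ?_, ?_⟩, ?_⟩
    · intro i j
      by_cases h : e i = j <;> simp [h]
    · intro j
      show ∑ k, (if e k = j then (1:ℝ) else 0) = 1
      simp [Equiv.apply_eq_iff_eq_symm_apply]
    · intro k
      show ∑ j, (if e k = j then (1:ℝ) else 0) = 1
      simp
    · funext j
      have h1 : (s ᵥ* (fun k j => if e k = j then (1:ℝ) else 0)) j
          = ∑ k, s k * if e k = j then 1 else 0 := by
        simp [Matrix.vecMul, dotProduct]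
      have h2 : (t ᵥ* X) j = ∑ i, t i * X i j := by
        simp [Matrix.vecMul, dotProduct]
      rw [h1, h2]
      have h3 : ∑ k, s k * (if e k = j then (1:ℝ) else 0) = s (e.symm j) := by
        simp [Equiv.apply_eq_iff_eq_symm_apply, mul_ite]
      have h4 : ∑ i, t i * X i j = t (f j) := by
        simp only [hXind, mul_ite, mul_one, mul_zero]
        simp
      rw [h3, h4, hsk, ← hfe (e.symm j), Equiv.apply_symm_apply]
  · intro P hP
    funext j
    have h1 : (s ᵥ* P) j = ∑ k, s k * P k j := by
      simp [Matrix.vecMul, dotProduct]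
    rw [h1]
    have h2 : (t ᵥ* (Matrix.of fun i j =>
        ∑ k ∈ Finset.univ.filter (fun k : Fin n => InBlock r i k.val), P k j)) j
        = ∑ i, ∑ k ∈ Finset.univ.filter (fun k : Fin n => InBlock r i k.val),
            t i * P k j := by
      simp [Matrix.vecMul, dotProduct, Finset.mul_sum]
    rw [h2]
    rw [← Finset.sum_fiberwise Finset.univ g (fun k => s k * P k j)]
    apply Finset.sum_congr rfl
    intro i _
    rw [show Finset.univ.filter (fun k : Fin n => InBlock r i k.val)
        = Finset.univ.filter (fun k : Fin n => g k = i) by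
      apply Finset.filter_congr; intro k _; simp [hgiff]]
    apply Finset.sum_congr rfl
    intro k hk
    rw [Finset.mem_filter] at hk
    rw [hsk k, hk.2]
end

section
/- For distinct multipermutation matrices X and Y parameterized by r, tr(Xᵀ(E − Y)) ≥ 2, where E is the m×n all-ones matrix; and tr(Xᵀ(E − Y)) = 0 if and only if X = Y. -/
open Matrix Finset
open scoped Classical

lemma col_unique {m n : ℕ} {r : Fin m → ℕ} {X : Matrix (Fin m) (Fin n) ℝ}
    (hX : IsMPM r X) (j : Fin n) : ∃ i0, ∀ i, X i j = if i = i0 then 1 else 0 := by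
  classical
  obtain ⟨h01, hcol, -⟩ := hX
  have hex : ∃ i0, X i0 j = 1 := by
    by_contra h
    push_neg at h
    have hz : ∀ i, X i j = 0 := fun i => (h01 i j).resolve_right (h i)
    have := hcol j
    simp [hz] at this
  obtain ⟨i0, hi0⟩ := hex
  have herase : ∑ i ∈ univ.erase i0, X i j = 0 := by
    have := Finset.add_sum_erase univ (fun i => X i j) (Finset.mem_univ i0)
    rw [hcol j] at this
    linarith [this, hi0]
  have hz : ∀ i ∈ univ.erase i0, X i j = 0 := by
    intro i hi
    have hnn : ∀ i ∈ univ.erase i0, (0:ℝ) ≤ X i j := by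
      intro k _
      rcases h01 k j with h | h <;> simp [h]
    exact (Finset.sum_eq_zero_iff_of_nonneg hnn).mp herase i hi
  refine ⟨i0, fun i => ?_⟩
  by_cases hi : i = i0
  · simp [hi, hi0]
  · simp only [hi, if_false]
    exact hz i (Finset.mem_erase.mpr ⟨hi, Finset.mem_univ i⟩)

theorem stmt_15 {m n : ℕ} (r : Fin m → ℕ)
    (X Y : Matrix (Fin m) (Fin n) ℝ) (hX : IsMPM r X) (hY : IsMPM r Y)
    (E : Matrix (Fin m) (Fin n) ℝ) (hE : ∀ i j, E i j = 1) :
    (X ≠ Y → 2 ≤ Matrix.trace (Xᵀ * (E - Y))) ∧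
      (Matrix.trace (Xᵀ * (E - Y)) = 0 ↔ X = Y) := by
  classical
  have htr : Matrix.trace (Xᵀ * (E - Y)) = ∑ j, ∑ i, X i j * (1 - Y i j) := by
    simp [Matrix.trace, Matrix.diag, Matrix.mul_apply, Matrix.sub_apply, hE]
  have hf : ∀ j, (∑ i, X i j * (1 - Y i j)) =
      if (∀ i, X i j = Y i j) then 0 else 1 := by
    intro j
    obtain ⟨i0, h0⟩ := col_unique hX j
    obtain ⟨i1, h1⟩ := col_unique hY j
    have hsum : (∑ i, X i j * (1 - Y i j)) = 1 - Y i0 j := by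
      have : ∀ i, X i j * (1 - Y i j) = if i = i0 then 1 - Y i j else 0 := by
        intro i; rw [h0 i]; split <;> simp
      rw [Finset.sum_congr rfl (fun i _ => this i), Finset.sum_ite_eq' univ i0]
      simp
    by_cases h : i0 = i1
    · have heq : ∀ i, X i j = Y i j := by
        intro i; rw [h0 i, h1 i, h]
      rw [hsum, if_pos heq, h1 i0, if_pos h]
      ring
    · have hne : ¬ (∀ i, X i j = Y i j) := by
        intro hk
        have := hk i0
        rw [h0 i0, h1 i0, if_pos rfl, if_neg h] at this
        norm_num at this
      rw [hsum, if_neg hne, h1 i0, if_neg h]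
      ring
  set D : Finset (Fin n) := univ.filter (fun j => ¬ ∀ i, X i j = Y i j) with hD
  have htr2 : Matrix.trace (Xᵀ * (E - Y)) = (D.card : ℝ) := by
    rw [htr, Finset.sum_congr rfl (fun j _ => hf j), Finset.sum_ite, Finset.sum_const,
      Finset.sum_const]
    simp [hD]
  have hXY_iff : X = Y ↔ D = ∅ := by
    constructor
    · intro h; subst h; simp [hD]
    · intro h
      ext i j
      by_contra hne
      have : j ∈ D := by
        simp only [hD, Finset.mem_filter, Finset.mem_univ, true_and]
        intro hk; exact hne (hk i)
      rw [h] at this; exact absurd this (Finset.notMem_empty j)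
  constructor
  · intro hne
    rw [htr2]
    have hDne : D.Nonempty := by
      rcases Finset.eq_empty_or_nonempty D with h | h
      · exact absurd (hXY_iff.mpr h) hne
      · exact h
    obtain ⟨j0, hj0⟩ := hDne
    have hj0' : ¬ ∀ i, X i j0 = Y i j0 := (Finset.mem_filter.mp hj0).2
    have hcard : 2 ≤ D.card := by
      by_contra hc
      push_neg at hc
      interval_cases h : D.card
      · exact absurd (Finset.card_eq_zero.mp h ▸ hj0) (Finset.notMem_empty j0)
      · obtain ⟨a, ha⟩ := Finset.card_eq_one.mp h
        have hj0a : j0 = a := by rw [ha] at hj0; exact Finset.mem_singleton.mp hj0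
        subst hj0a
        -- every j ≠ j0 has equal columns
        have hother : ∀ j, j ≠ j0 → ∀ i, X i j = Y i j := by
          intro j hj i
          by_contra hne2
          have : j ∈ D := by
            simp only [hD, Finset.mem_filter, Finset.mem_univ, true_and]
            intro hk; exact hne2 (hk i)
          rw [ha] at this
          exact hj (Finset.mem_singleton.mp this)
        apply hj0'
        intro i
        have h2 : ∑ j, X i j = ∑ j, Y i j := by rw [hX.2.2 i, hY.2.2 i]
        rw [← Finset.add_sum_erase univ (fun j => X i j) (Finset.mem_univ j0),
          ← Finset.add_sum_erase univ (fun j => Y i j) (Finset.mem_univ j0)] at h2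
        have h3 : ∑ j ∈ univ.erase j0, X i j = ∑ j ∈ univ.erase j0, Y i j := by
          apply Finset.sum_congr rfl
          intro j hj
          exact hother j (Finset.mem_erase.mp hj).1 i
        rw [h3] at h2
        exact add_right_cancel h2
    exact_mod_cast hcard
  · rw [htr2, hXY_iff]
    constructor
    · intro h
      have : D.card = 0 := by exact_mod_cast h
      exact Finset.card_eq_zero.mp this
    · intro h; simp [h]
end

section
/- Let t ∈ R^m have distinct entries and let Y be the m×n indicator matrix of a received word y ∈ {1,...,m}^n (Y_{ij} = 1 iff y_j = i, identifying t_i with symbol i). For any multipermutation matrix X parameterized by r with x = t·X, tr(Yᵀ X) = n − d_H(x, y), where d_H is the Hamming distance between the vectors x and t·Y. -/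
open Matrix Finset
open scoped Classical

theorem stmt_19 {m n : ℕ} (r : Fin m → ℕ)
    (t : Fin m → ℝ) (ht : Function.Injective t)
    (y : Fin n → Fin m) (Y : Matrix (Fin m) (Fin n) ℝ)
    (hY : ∀ i j, Y i j = if y j = i then 1 else 0)
    (X : Matrix (Fin m) (Fin n) ℝ) (hX : IsMPM r X) :
    Matrix.trace (Yᵀ * X) =
      (n : ℝ) - ((Finset.univ.filter fun j => (t ᵥ* X) j ≠ (t ᵥ* Y) j).card : ℝ) := by
  obtain ⟨h01, hcol, hrow⟩ := hX
  have key : ∀ j, X (y j) j = if (t ᵥ* X) j = (t ᵥ* Y) j then (1:ℝ) else 0 := by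
    intro j
    obtain ⟨i₀, hi₀⟩ : ∃ i, X i j = 1 := by
      by_contra h
      push_neg at h
      have hz : ∀ i, X i j = 0 := fun i => (h01 i j).resolve_right (h i)
      have hc := hcol j
      simp [hz] at hc
    have hzero : ∀ i, i ≠ i₀ → X i j = 0 := by
      intro i hi
      have hc := hcol j
      rw [← Finset.add_sum_erase _ _ (Finset.mem_univ i₀), hi₀, add_eq_left] at hc
      have hnn : ∀ i' ∈ Finset.univ.erase i₀, 0 ≤ X i' j := by
        intro i' _; rcases h01 i' j with h|h <;> simp [h]
      exact (Finset.sum_eq_zero_iff_of_nonneg hnn).1 hc i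
        (Finset.mem_erase.2 ⟨hi, Finset.mem_univ i⟩)
    have hXv : (t ᵥ* X) j = t i₀ := by
      simp only [Matrix.vecMul, dotProduct]
      rw [Finset.sum_eq_single i₀]
      · rw [hi₀]; ring
      · intro b _ hb; rw [hzero b hb]; ring
      · simp
    have hYv : (t ᵥ* Y) j = t (y j) := by
      simp only [Matrix.vecMul, dotProduct, hY]
      simp
    rw [hXv, hYv]
    by_cases h : i₀ = y j
    · subst h; simp [hi₀]
    · rw [if_neg (fun he => h (ht he)), hzero (y j) (fun he => h he.symm)]
  have htr : Matrix.trace (Yᵀ * X)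
      = ∑ j, if (t ᵥ* X) j = (t ᵥ* Y) j then (1:ℝ) else 0 := by
    rw [Matrix.trace]
    refine Finset.sum_congr rfl fun j _ => ?_
    rw [← key j]
    simp only [Matrix.diag, Matrix.mul_apply, Matrix.transpose_apply, hY]
    rw [Finset.sum_eq_single (y j)]
    · simp
    · intro b _ hb; simp [Ne.symm hb]
    · simp
  rw [htr, Finset.sum_boole]
  have hc := Finset.card_filter_add_card_filter_not
    (s := (Finset.univ : Finset (Fin n))) (p := fun j => (t ᵥ* X) j = (t ᵥ* Y) j)
  simp only [Finset.card_univ, Fintype.card_fin] at hc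
  have : ((Finset.univ.filter fun j => (t ᵥ* X) j = (t ᵥ* Y) j).card : ℝ)
      + ((Finset.univ.filter fun j => ¬ (t ᵥ* X) j = (t ᵥ* Y) j).card : ℝ) = n := by
    exact_mod_cast congrArg (Nat.cast : ℕ → ℝ) hc
  push_cast at this ⊢
  linarith
end
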